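/- (Claim 1 of Werner.) For every (x₀,y₀,z₀) ∈ k³ \ {(0,0,0)} at which all three partial derivatives ∂F_φ/∂x, ∂F_φ/∂y, ∂F_φ/∂z (computed in (ℤ/30047)[x,y,z] and evaluated in k) vanish, the projective point [x₀:y₀:z₀] ∈ ℙ²(k) equals one of the six points p, p1, p2, p3, p4, p5. In other words, the plane curve {F_φ = 0} over the algebraic closure k of ℤ/30047 has no singular points other than at p, p1, p2, p3, p4, p5. -/
import Mathlib


noncomputable section

open MvPolynomial

instance : Fact (Nat.Prime 30047) := ⟨by norm_num⟩

/-- The prime field `ℤ/30047`. -/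
abbrev Fp : Type := ZMod 30047

/-- `k`, an algebraic closure of `ℤ/30047`. -/
abbrev kbar : Type := AlgebraicClosure Fp

def x : MvPolynomial (Fin 3) Fp := X 0
def y : MvPolynomial (Fin 3) Fp := X 1
def z : MvPolynomial (Fin 3) Fp := X 2

/-- The reduced octic `F_φ ∈ (ℤ/30047)[x,y,z]`. -/
def Fphi : MvPolynomial (Fin 3) Fp :=
  24082*x^4*y^4 + 3438*x^4*y^3*z + 4775*x^4*y^2*z^2 + 29499*x^4*y*z^3
  + 12698*x^4*z^4 + 29927*x^3*y^5 + 14121*x^3*y^4*z + 17243*x^3*y^3*z^2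
  + 3139*x^3*y^2*z^3 + 8704*x^3*y*z^4 + 80*x^3*z^5 + 28712*x^2*y^4*z^2
  + 10654*x^2*y^3*z^3 + 12817*x^2*y^2*z^4 + 8239*x^2*y*z^5 + 5515*x^2*z^6
  + 28759*x*y^3*z^4 + 7372*x*y^2*z^5 + 19696*x*y*z^6 + 28079*x*z^7
  + 1944*y^2*z^6 + 24003*y*z^7 + 13722*z^8

/-- `ᾱ = 20452` in `ℤ/30047`. -/
def abar : Fp := 20452
/-- `β̄ = 6941` in `ℤ/30047`. -/
def bbar : Fp := 6941
/-- `δ̄ = 27962` in `ℤ/30047`. -/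
def dbar : Fp := 27962

/-- A point of `ℙ²(k)` with coordinates in `ℤ/30047`, as a coordinate vector in `k³`. -/
def pk (a b c : Fp) : Fin 3 → kbar :=
  ![algebraMap Fp kbar a, algebraMap Fp kbar b, algebraMap Fp kbar c]

/-- Coordinate representative of `p = [1:0:0]`. -/
def ptP : Fin 3 → kbar := pk 1 0 0
/-- Coordinate representative of `p1 = [0:1:0]`. -/
def ptP1 : Fin 3 → kbar := pk 0 1 0
/-- Coordinate representative of `p2 = [10+4ᾱ+4β̄ : 3δ̄ : 6]`. -/
def ptP2 : Fin 3 → kbar := pk (10+4*abar+4*bbar) (3*dbar) 6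
/-- Coordinate representative of `p3 = [1:0:1]`. -/
def ptP3 : Fin 3 → kbar := pk 1 0 1
/-- Coordinate representative of `p4 = [16+4ᾱ+4β̄ : 3δ̄+6 : 12]`. -/
def ptP4 : Fin 3 → kbar := pk (16+4*abar+4*bbar) (3*dbar+6) 12
/-- Coordinate representative of `p5 = [16+4ᾱ+4β̄ : 3δ̄−6 : 12]`. -/
def ptP5 : Fin 3 → kbar := pk (16+4*abar+4*bbar) (3*dbar-6) 12

set_option maxHeartbeats 4000000

theorem pderivOfNat (i : Fin 3) (n : ℕ) [n.AtLeastTwo] :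
    pderiv i (no_index (OfNat.ofNat n) : MvPolynomial (Fin 3) Fp) = 0 :=
  Derivation.map_natCast (pderiv i) n

/-- Claim 1 of Werner: the curve `{F_φ = 0}` over the algebraic closure
`k` of `ℤ/30047` has no singular points other than at `p, p1, p2, p3, p4, p5`. -/
theorem Fphi_no_other_singularities (P : Fin 3 → kbar) (hP : P ≠ 0)
    (hsing : ∀ i : Fin 3, aeval P (pderiv i Fphi) = 0) :
    ∃ t : kbar, t ≠ 0 ∧
      (P = t • ptP ∨ P = t • ptP1 ∨ P = t • ptP2 ∨ P = t • ptP3 ∨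
        P = t • ptP4 ∨ P = t • ptP5) := by
  have hp : (30047:kbar) = 0 := by
    exact_mod_cast CharP.cast_eq_zero kbar 30047
  have hc25751 : (25751:kbar) ≠ 0 := fun hcc => one_ne_zero (α := kbar) (by linear_combination (norm := ring1) 7211*hcc - 6180*hp)
  have hc29687 : (29687:kbar) ≠ 0 := fun hcc => one_ne_zero (α := kbar) (by linear_combination (norm := ring1) 21951*hcc - 21688*hp)
  have hc6187 : (6187:kbar) ≠ 0 := fun hcc => one_ne_zero (α := kbar) (by linear_combination (norm := ring1) 8290*hcc - 1707*hp)
  have hc5008 : (5008:kbar) ≠ 0 := fun hcc => one_ne_zero (α := kbar) (by linear_combination (norm := ring1) 6*hcc - 1*hp)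
  have hc2504 : (2504:kbar) ≠ 0 := fun hcc => one_ne_zero (α := kbar) (by linear_combination (norm := ring1) 12*hcc - 1*hp)
  have e0 : pderiv 0 Fphi = (96328*x^3*y^4 + 13752*x^3*y^3*z + 19100*x^3*y^2*z^2 + 117996*x^3*y*z^3 + 50792*x^3*z^4 + 89781*x^2*y^5 + 42363*x^2*y^4*z + 51729*x^2*y^3*z^2 + 9417*x^2*y^2*z^3 + 26112*x^2*y*z^4 + 240*x^2*z^5 + 57424*x*y^4*z^2 + 21308*x*y^3*z^3 + 25634*x*y^2*z^4 + 16478*x*y*z^5 + 11030*x*z^6 + 28759*y^3*z^4 + 7372*y^2*z^5 + 19696*y*z^6 + 28079*z^7) := by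
    simp only [Fphi, x, y, z, map_add, pderiv_mul, pderiv_pow, pderiv_X_self, pderivOfNat,
      pderiv_X_of_ne (show (1:Fin 3) ≠ 0 by decide), pderiv_X_of_ne (show (2:Fin 3) ≠ 0 by decide)]
    ring
  have hx : (96328*(P 0)^3*(P 1)^4 + 13752*(P 0)^3*(P 1)^3*(P 2) + 19100*(P 0)^3*(P 1)^2*(P 2)^2 + 117996*(P 0)^3*(P 1)*(P 2)^3 + 50792*(P 0)^3*(P 2)^4 + 89781*(P 0)^2*(P 1)^5 + 42363*(P 0)^2*(P 1)^4*(P 2) + 51729*(P 0)^2*(P 1)^3*(P 2)^2 + 9417*(P 0)^2*(P 1)^2*(P 2)^3 + 26112*(P 0)^2*(P 1)*(P 2)^4 + 240*(P 0)^2*(P 2)^5 + 57424*(P 0)*(P 1)^4*(P 2)^2 + 21308*(P 0)*(P 1)^3*(P 2)^3 + 25634*(P 0)*(P 1)^2*(P 2)^4 + 16478*(P 0)*(P 1)*(P 2)^5 + 11030*(P 0)*(P 2)^6 + 28759*(P 1)^3*(P 2)^4 + 7372*(P 1)^2*(P 2)^5 + 19696*(P 1)*(P 2)^6 + 28079*(P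 2)^7) = (0:kbar) := by
    have h := hsing 0
    rw [e0] at h
    simp only [map_add, map_mul, map_pow, map_ofNat, x, y, z, aeval_X] at h
    linear_combination (norm := ring1) h
  have e1 : pderiv 1 Fphi = (96328*x^4*y^3 + 10314*x^4*y^2*z + 9550*x^4*y*z^2 + 29499*x^4*z^3 + 149635*x^3*y^4 + 56484*x^3*y^3*z + 51729*x^3*y^2*z^2 + 6278*x^3*y*z^3 + 8704*x^3*z^4 + 114848*x^2*y^3*z^2 + 31962*x^2*y^2*z^3 + 25634*x^2*y*z^4 + 8239*x^2*z^5 + 86277*x*y^2*z^4 + 14744*x*y*z^5 + 19696*x*z^6 + 3888*y*z^6 + 24003*z^7) := by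
    simp only [Fphi, x, y, z, map_add, pderiv_mul, pderiv_pow, pderiv_X_self, pderivOfNat,
      pderiv_X_of_ne (show (0:Fin 3) ≠ 1 by decide), pderiv_X_of_ne (show (2:Fin 3) ≠ 1 by decide)]
    ring
  have hy : (96328*(P 0)^4*(P 1)^3 + 10314*(P 0)^4*(P 1)^2*(P 2) + 9550*(P 0)^4*(P 1)*(P 2)^2 + 29499*(P 0)^4*(P 2)^3 + 149635*(P 0)^3*(P 1)^4 + 56484*(P 0)^3*(P 1)^3*(P 2) + 51729*(P 0)^3*(P 1)^2*(P 2)^2 + 6278*(P 0)^3*(P 1)*(P 2)^3 + 8704*(P 0)^3*(P 2)^4 + 114848*(P 0)^2*(P 1)^3*(P 2)^2 + 31962*(P 0)^2*(P 1)^2*(P 2)^3 + 25634*(P 0)^2*(P 1)*(P 2)^4 + 8239*(P 0)^2*(P 2)^5 + 86277*(P 0)*(P 1)^2*(P 2)^4 + 14744*(P 0)*(P 1)*(P 2)^5 + 19696*(P 0)*(P 2)^6 + 3888*(P 1)*(P 2)^6 + 24003*(P 2)^7) = (0:kbar) := by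
    have h := hsing 1
    rw [e1] at h
    simp only [map_add, map_mul, map_pow, map_ofNat, x, y, z, aeval_X] at h
    linear_combination (norm := ring1) h
  have e2 : pderiv 2 Fphi = (3438*x^4*y^3 + 9550*x^4*y^2*z + 88497*x^4*y*z^2 + 50792*x^4*z^3 + 14121*x^3*y^4 + 34486*x^3*y^3*z + 9417*x^3*y^2*z^2 + 34816*x^3*y*z^3 + 400*x^3*z^4 + 57424*x^2*y^4*z + 31962*x^2*y^3*z^2 + 51268*x^2*y^2*z^3 + 41195*x^2*y*z^4 + 33090*x^2*z^5 + 115036*x*y^3*z^3 + 36860*x*y^2*z^4 + 118176*x*y*z^5 + 196553*x*z^6 + 11664*y^2*z^5 + 168021*y*z^6 + 109776*z^7) := by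
    simp only [Fphi, x, y, z, map_add, pderiv_mul, pderiv_pow, pderiv_X_self, pderivOfNat,
      pderiv_X_of_ne (show (0:Fin 3) ≠ 2 by decide), pderiv_X_of_ne (show (1:Fin 3) ≠ 2 by decide)]
    ring
  have hz : (3438*(P 0)^4*(P 1)^3 + 9550*(P 0)^4*(P 1)^2*(P 2) + 88497*(P 0)^4*(P 1)*(P 2)^2 + 50792*(P 0)^4*(P 2)^3 + 14121*(P 0)^3*(P 1)^4 + 34486*(P 0)^3*(P 1)^3*(P 2) + 9417*(P 0)^3*(P 1)^2*(P 2)^2 + 34816*(P 0)^3*(P 1)*(P 2)^3 + 400*(P 0)^3*(P 2)^4 + 57424*(P 0)^2*(P 1)^4*(P 2) + 31962*(P 0)^2*(P 1)^3*(P 2)^2 + 51268*(P 0)^2*(P 1)^2*(P 2)^3 + 41195*(P 0)^2*(P 1)*(P 2)^4 + 33090*(P 0)^2*(P 2)^5 + 115036*(P 0)*(P 1)^3*(P 2)^3 + 36860*(P 0)*(P 1)^2*(P 2)^4 + 118176*(P 0)*(P 1)*(P 2)^5 + 196553*(P 0)*(P 2)^6 + 11664*(P 1)^2*(P 2)^5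 + 168021*(P 1)*(P 2)^6 + 109776*(P 2)^7) = (0:kbar) := by
    have h := hsing 2
    rw [e2] at h
    simp only [map_add, map_mul, map_pow, map_ofNat, x, y, z, aeval_X] at h
    linear_combination (norm := ring1) h
  by_cases hZ : P 2 = 0
  · have t1 : (P 0)^2 * ((P 1)^4 * (6187*(P 0) + 29687*(P 1))) = (0:kbar) := by
      linear_combination (norm := ring1) (1)*hx + ((-13752)*(P 0)^3*(P 1)^3 + 10947*(P 0)^3*(P 1)^2*(P 2) + 2192*(P 0)^3*(P 1)*(P 2)^2 + 9302*(P 0)^3*(P 2)^3 + (-12316)*(P 0)^2*(P 1)^4 + 8365*(P 0)^2*(P 1)^3*(P 2) + (-9417)*(P 0)^2*(P 1)^2*(P 2)^2 + 3935*(P 0)^2*(P 1)*(P 2)^3 + (-240)*(P 0)^2*(P 2)^4 + 2670*(P 0)*(P 1)^4*(P 2) + 8739*(P 0)*(P 1)^3*(P 2)^2 + 4413*(P 0)*(P 1)^2*(P 2)^3 + 13569*(P 0)*(P 1)*(P 2)^4 + (-11030)*(P 0)*(P 2)^5 + 1288*(P 1)^3*(P 2)^3 + (-7372)*(P 1)^2*(P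 2)^4 + 10351*(P 1)*(P 2)^5 + 1968*(P 2)^6)*hZ + ((-3)*(P 0)^3*(P 1)^4 + (-1)*(P 0)^3*(P 1)^2*(P 2)^2 + (-4)*(P 0)^3*(P 1)*(P 2)^3 + (-2)*(P 0)^3*(P 2)^4 + (-2)*(P 0)^2*(P 1)^5 + (-1)*(P 0)^2*(P 1)^4*(P 2) + (-2)*(P 0)^2*(P 1)^3*(P 2)^2 + (-1)*(P 0)^2*(P 1)*(P 2)^4 + (-2)*(P 0)*(P 1)^4*(P 2)^2 + (-1)*(P 0)*(P 1)^3*(P 2)^3 + (-1)*(P 0)*(P 1)^2*(P 2)^4 + (-1)*(P 0)*(P 1)*(P 2)^5 + (-1)*(P 1)^3*(P 2)^4 + (-1)*(P 1)*(P 2)^6 + (-1)*(P 2)^7)*hp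
    have t2 : (P 0)^3 * ((P 1)^3 * (3438*(P 0) + 14121*(P 1))) = (0:kbar) := by
      linear_combination (norm := ring1) (1)*hz + ((-9550)*(P 0)^4*(P 1)^2 + 1644*(P 0)^4*(P 1)*(P 2) + 9302*(P 0)^4*(P 2)^2 + (-4439)*(P 0)^3*(P 1)^3 + (-9417)*(P 0)^3*(P 1)^2*(P 2) + (-4769)*(P 0)^3*(P 1)*(P 2)^2 + (-400)*(P 0)^3*(P 2)^3 + 2670*(P 0)^2*(P 1)^4 + (-1915)*(P 0)^2*(P 1)^3*(P 2) + 8826*(P 0)^2*(P 1)^2*(P 2)^2 + (-11148)*(P 0)^2*(P 1)*(P 2)^3 + (-3043)*(P 0)^2*(P 2)^4 + 5152*(P 0)*(P 1)^3*(P 2)^2 + (-6813)*(P 0)*(P 1)^2*(P 2)^3 + 2012*(P 0)*(P 1)*(P 2)^4 + 13776*(P 0)*(P 2)^5 + (-11664)*(P 1)^2*(P 2)^4 + 12261*(P 1)*(P 2)^5 + 10412*(P 2)^6)*hZ + ((-3)*(P 0)^4*(P 1)*(P 2)^2 + (-2)*(P 0)^4*(P 2)^3 + (-1)*(P 0)^3*(P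 1)^3*(P 2) + (-1)*(P 0)^3*(P 1)*(P 2)^3 + (-2)*(P 0)^2*(P 1)^4*(P 2) + (-1)*(P 0)^2*(P 1)^3*(P 2)^2 + (-2)*(P 0)^2*(P 1)^2*(P 2)^3 + (-1)*(P 0)^2*(P 1)*(P 2)^4 + (-1)*(P 0)^2*(P 2)^5 + (-4)*(P 0)*(P 1)^3*(P 2)^3 + (-1)*(P 0)*(P 1)^2*(P 2)^4 + (-4)*(P 0)*(P 1)*(P 2)^5 + (-7)*(P 0)*(P 2)^6 + (-6)*(P 1)*(P 2)^6 + (-4)*(P 2)^7)*hp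
    have hPn0 : ¬(P 0 = 0 ∧ P 1 = 0) := by
      rintro ⟨h0, h1⟩
      exact hP (funext fun i => by fin_cases i <;> simp [h0, h1, hZ])
    rcases mul_eq_zero.mp t1 with h1|h1
    · have hX0 : P 0 = 0 := pow_eq_zero_iff two_ne_zero |>.mp h1
      have hY : P 1 ≠ 0 := fun h => hPn0 ⟨hX0, h⟩
      refine ⟨P 1, hY, Or.inr (Or.inl ?_)⟩
      funext i; fin_cases i <;>
        simp [ptP1, pk, hX0, hZ]
    rcases mul_eq_zero.mp h1 with h2|hL
    · have hY0 : P 1 = 0 := pow_eq_zero_iff (by norm_num) |>.mp h2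
      have hX : P 0 ≠ 0 := fun h => hPn0 ⟨h, hY0⟩
      refine ⟨P 0, hX, Or.inl ?_⟩
      funext i; fin_cases i <;>
        simp [ptP, pk, hY0, hZ]
    · -- hL : 6187*(P 0) + 29687*(P 1) = 0
      exfalso
      rcases mul_eq_zero.mp t2 with h3|h3
      · have hX0 : P 0 = 0 := pow_eq_zero_iff (by norm_num) |>.mp h3
        have e29 : (29687:kbar) * P 1 = 0 := by
          linear_combination (norm := ring1) hL - 6187*hX0
        have hY0 : P 1 = 0 := by
          rcases mul_eq_zero.mp e29 with h|h
          · exact absurd h hc29687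
          · exact h
        exact hPn0 ⟨hX0, hY0⟩
      rcases mul_eq_zero.mp h3 with h4|hM
      · have hY0 : P 1 = 0 := pow_eq_zero_iff (by norm_num) |>.mp h4
        have e61 : (6187:kbar) * P 0 = 0 := by
          linear_combination (norm := ring1) hL - 29687*hY0
        have hX0 : P 0 = 0 := by
          rcases mul_eq_zero.mp e61 with h|h
          · exact absurd h hc6187
          · exact h
        exact hPn0 ⟨hX0, hY0⟩
      · have e25 : (25751:kbar) * P 0 = 0 := by
          linear_combination (norm := ring1) (14121)*hL + (360)*hM + ((-2948)*(P 0) + (-14121)*(P 1))*hp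
        have hX0 : P 0 = 0 := by
          rcases mul_eq_zero.mp e25 with h|h
          · exact absurd h hc25751
          · exact h
        have e29 : (29687:kbar) * P 1 = 0 := by
          linear_combination (norm := ring1) hL - 6187*hX0
        have hY0 : P 1 = 0 := by
          rcases mul_eq_zero.mp e29 with h|h
          · exact absurd h hc29687
          · exact h
        exact hPn0 ⟨hX0, hY0⟩
  · have hmain : ((P 0) - 8248*(P 2))^2 * (((P 0) - (P 2))^2 * (((P 0) - 19148*(P 2))^3 * (P 2)^5)) = (0:kbar) := by
      linear_combination (norm := ring1) ((-5000)*(P 0)^4*(P 1) + (-5257)*(P 0)^4*(P 2) + (-477)*(P 0)^3*(P 1)^2 + (-6164)*(P 0)^3*(P 1)*(P 2) + 8947*(P 0)^3*(P 2)^2 + (-2673)*(P 0)^2*(P 1)^3 + 7267*(P 0)^2*(P 1)^2*(P 2) + 8493*(P 0)^2*(P 1)*(P 2)^2 + (-10305)*(P 0)^2*(P 2)^3 + 212*(P 0)*(P 1)^4 + 549*(P 0)*(P 1)^3*(P 2) + (-5879)*(P 0)*(P 1)^2*(P 2)^2 + (-12254)*(P 0)*(P 1)*(P 2)^3 + 12029*(P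 0)*(P 2)^4 + (-4977)*(P 1)^2*(P 2)^3 + 7477*(P 1)*(P 2)^4 + 9954*(P 2)^5)*hx + (11097*(P 0)^3*(P 1)^2 + (-5254)*(P 0)^3*(P 1)*(P 2) + (-9405)*(P 0)^3*(P 2)^2 + (-291)*(P 0)^2*(P 1)^3 + 8218*(P 0)^2*(P 1)^2*(P 2) + 13364*(P 0)^2*(P 1)*(P 2)^2 + 5865*(P 0)^2*(P 2)^3 + 13458*(P 0)*(P 1)^4 + (-8973)*(P 0)*(P 1)^3*(P 2) + 5140*(P 0)*(P 1)^2*(P 2)^2 + (-832)*(P 0)*(P 1)*(P 2)^3 + 10648*(P 0)*(P 2)^4 + (-12146)*(P 1)^5 + 13727*(P 1)^4*(P 2) + 5649*(P 1)^3*(P 2)^2 + 6926*(P 1)^2*(P 2)^3 + (-11990)*(P 1)*(P 2)^4 + (-7108)*(P 2)^5)*hy + ((-703)*(P 0)^3*(P 1)^2 + (-3730)*(P 0)^2*(P 1)^3 + 8429*(P 0)^2*(P 1)^2*(P 2) + (-10547)*(P 0)^2*(P 1)*(P 2)^2 + (-12290)*(P 0)^2*(P 2)^3 + 4909*(P 0)*(P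 1)^4 + 4456*(P 0)*(P 1)^3*(P 2) + 12203*(P 0)*(P 1)^2*(P 2)^2 + (-9581)*(P 0)*(P 1)*(P 2)^3 + (-6671)*(P 0)*(P 2)^4 + (-5967)*(P 1)^4*(P 2) + 8288*(P 1)^3*(P 2)^2 + (-3807)*(P 1)^2*(P 2)^3 + 12680*(P 1)*(P 2)^4 + 4282*(P 2)^5)*hz + ((-19466)*(P 0)^7*(P 1)^5 + 32400*(P 0)^7*(P 1)^4*(P 2) + 36083*(P 0)^7*(P 1)^3*(P 2)^2 + 18169*(P 0)^7*(P 1)^2*(P 2)^3 + 37244*(P 0)^7*(P 1)*(P 2)^4 + 18120*(P 0)^7*(P 2)^5 + (-37104)*(P 0)^6*(P 1)^6 + 22823*(P 0)^6*(P 1)^5*(P 2) + (-7768)*(P 0)^6*(P 1)^4*(P 2)^2 + (-1943)*(P 0)^6*(P 1)^3*(P 2)^3 + 45795*(P 0)^6*(P 1)^2*(P 2)^4 + 22422*(P 0)^6*(P 1)*(P 2)^5 + 2657*(P 0)^6*(P 2)^6 + (-30510)*(P 0)^5*(P 1)^7 + (-19622)*(P 0)^5*(P 1)^6*(P 2) +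 (-198185)*(P 0)^5*(P 1)^5*(P 2)^2 + (-26274)*(P 0)^5*(P 1)^4*(P 2)^3 + (-91043)*(P 0)^5*(P 1)^3*(P 2)^4 + (-15120)*(P 0)^5*(P 1)^2*(P 2)^5 + 75129*(P 0)^5*(P 1)*(P 2)^6 + 91558*(P 0)^5*(P 2)^7 + (-23082)*(P 0)^4*(P 1)^8 + (-40171)*(P 0)^4*(P 1)^7*(P 2) + (-84977)*(P 0)^4*(P 1)^6*(P 2)^2 + 38525*(P 0)^4*(P 1)^5*(P 2)^3 + (-155485)*(P 0)^4*(P 1)^4*(P 2)^4 + 22364*(P 0)^4*(P 1)^3*(P 2)^5 + 40419*(P 0)^4*(P 1)^2*(P 2)^6 + 1552*(P 0)^4*(P 1)*(P 2)^7 + (-967728562)*(P 0)^4*(P 2)^8 + 59854*(P 0)^3*(P 1)^9 + (-54045)*(P 0)^3*(P 1)^8*(P 2) + (-73715)*(P 0)^3*(P 1)^7*(P 2)^2 + (-26379)*(P 0)^3*(P 1)^6*(P 2)^3 + (-66345)*(P 0)^3*(P 1)^5*(P 2)^4 + 18055*(P 0)^3*(P 1)^4*(P 2)^5 + (-13289)*(P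 0)^3*(P 1)^3*(P 2)^6 + (-53770)*(P 0)^3*(P 1)^2*(P 2)^7 + 62120*(P 0)^3*(P 1)*(P 2)^8 + 6346627790312*(P 0)^3*(P 2)^9 + 57424*(P 0)^2*(P 1)^8*(P 2)^2 + (-54163)*(P 0)^2*(P 1)^7*(P 2)^3 + (-81017)*(P 0)^2*(P 1)^6*(P 2)^4 + (-128903)*(P 0)^2*(P 1)^5*(P 2)^5 + (-62739)*(P 0)^2*(P 1)^4*(P 2)^6 + (-66673)*(P 0)^2*(P 1)^3*(P 2)^7 + (-68235)*(P 0)^2*(P 1)^2*(P 2)^8 + 157582*(P 0)^2*(P 1)*(P 2)^9 + (-15907906721266533)*(P 0)^2*(P 2)^10 + 57518*(P 0)*(P 1)^7*(P 2)^4 + (-50838)*(P 0)*(P 1)^6*(P 2)^5 + (-23447)*(P 0)*(P 1)^5*(P 2)^6 + (-133743)*(P 0)*(P 1)^4*(P 2)^7 + (-134036)*(P 0)*(P 1)^3*(P 2)^8 + (-1073)*(P 0)*(P 1)^2*(P 2)^9 + (-21483)*(P 0)*(P 1)*(P 2)^10 + 31796777430052257*(P 0)*(P 2)^11 + 3888*(P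 1)^6*(P 2)^6 + 42840*(P 1)^5*(P 2)^7 + (-40700)*(P 1)^4*(P 2)^8 + (-27422)*(P 1)^3*(P 2)^9 + (-65333)*(P 1)^2*(P 2)^10 + (-73285)*(P 1)*(P 2)^11 + (-15895216368815086)*(P 2)^12)*hp
    rcases mul_eq_zero.mp hmain with h1|h1
    · have hXZ : P 0 - 8248*(P 2) = 0 := pow_eq_zero_iff two_ne_zero |>.mp h1
      have hq : ((P 1) - 13981*(P 2))^2 * (P 2)^7 = (0:kbar) := by
        linear_combination (norm := ring1) ((-1496)*(P 1)*(P 2) + (-1787)*(P 2)^2)*hx + ((-2174)*(P 1)^2 + 8978*(P 1)*(P 2) + (-4164)*(P 2)^2)*hy + ((-10518)*(P 0)^3*(P 1)^5 + (-12456)*(P 0)^3*(P 1)^4*(P 2) + (-12673)*(P 0)^3*(P 1)^3*(P 2)^2 + 5052*(P 0)^3*(P 1)^2*(P 2)^3 + 6255*(P 0)^3*(P 1)*(P 2)^4 + 1700*(P 0)^3*(P 2)^5 + (-12379)*(P 0)^2*(P 1)^6 + (-2985)*(P 0)^2*(P 1)^5*(P 2) + (-8385)*(P 0)^2*(P 1)^4*(P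 2)^2 + 13901*(P 0)^2*(P 1)^3*(P 2)^3 + 7740*(P 0)^2*(P 1)^2*(P 2)^4 + (-6047)*(P 0)^2*(P 1)*(P 2)^5 + (-10258)*(P 0)^2*(P 2)^6 + 834*(P 0)*(P 1)^5*(P 2)^2 + 12746*(P 0)*(P 1)^4*(P 2)^3 + (-8799)*(P 0)*(P 1)^3*(P 2)^4 + (-2944)*(P 0)*(P 1)^2*(P 2)^5 + (-11050)*(P 0)*(P 1)*(P 2)^6 + 6112*(P 0)*(P 2)^7 + 10463*(P 1)^4*(P 2)^4 + (-14294)*(P 1)^3*(P 2)^5 + (-2277)*(P 1)^2*(P 2)^6 + 1256*(P 1)*(P 2)^7 + 8569*(P 2)^8)*hXZ + (6970*(P 0)^4*(P 1)^5 + (-28036)*(P 0)^4*(P 1)^4*(P 2) + 10959*(P 0)^4*(P 1)^3*(P 2)^2 + 710*(P 0)^4*(P 1)^2*(P 2)^3 + (-7491)*(P 0)^4*(P 1)*(P 2)^4 + 4088*(P 0)^4*(P 2)^5 + 10827*(P 0)^3*(P 1)^6 + (-38715)*(P 0)^3*(P 1)^5*(P 2) + 10597*(P 0)^3*(P 1)^4*(P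 2)^2 + (-8885)*(P 0)^3*(P 1)^3*(P 2)^3 + 14320*(P 0)^3*(P 1)^2*(P 2)^4 + 9533*(P 0)^3*(P 1)*(P 2)^5 + 4694*(P 0)^3*(P 2)^6 + 1072*(P 0)^2*(P 1)^6*(P 2) + 14939*(P 0)^2*(P 1)^5*(P 2)^2 + (-29211)*(P 0)^2*(P 1)^4*(P 2)^3 + 15582*(P 0)^2*(P 1)^3*(P 2)^4 + 1351*(P 0)^2*(P 1)^2*(P 2)^5 + 996*(P 0)^2*(P 1)*(P 2)^6 + (-1660)*(P 0)^2*(P 2)^7 + 3088*(P 0)*(P 1)^5*(P 2)^3 + 14217*(P 0)*(P 1)^4*(P 2)^4 + (-24584)*(P 0)*(P 1)^3*(P 2)^5 + 10513*(P 0)*(P 1)^2*(P 2)^6 + (-5346)*(P 0)*(P 1)*(P 2)^7 + 5063*(P 0)*(P 2)^8 + 4304*(P 1)^4*(P 2)^5 + (-1565)*(P 1)^3*(P 2)^6 + 1369*(P 1)^2*(P 2)^7 + (-3720)*(P 1)*(P 2)^8 + 13854*(P 2)^9)*hp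
      have hYZ : P 1 - 13981*(P 2) = 0 := by
        rcases mul_eq_zero.mp hq with h|h
        · exact pow_eq_zero_iff two_ne_zero |>.mp h
        · exact absurd h (pow_ne_zero _ hZ)
      have c0 : P 0 = 5008 * P 2 * algebraMap Fp kbar (10+4*abar+4*bbar) := by
        rw [show (algebraMap Fp kbar) (10+4*abar+4*bbar) = (109582:kbar) from by simp only [abar, bbar, dbar, map_add, map_sub, map_mul, map_ofNat, map_one]; try norm_num]
        linear_combination (norm := ring1) (1)*hXZ + ((-18264)*(P 2))*hp
      have c1 : P 1 = 5008 * P 2 * algebraMap Fp kbar (3*dbar) := by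
        rw [show (algebraMap Fp kbar) (3*dbar) = (83886:kbar) from by simp only [abar, bbar, dbar, map_add, map_sub, map_mul, map_ofNat, map_one]; try norm_num]
        linear_combination (norm := ring1) (1)*hYZ + ((-13981)*(P 2))*hp
      have c2 : P 2 = 5008 * P 2 * algebraMap Fp kbar (6:Fp) := by
        rw [show (algebraMap Fp kbar) (6:Fp) = (6:kbar) from by simp only [abar, bbar, dbar, map_add, map_sub, map_mul, map_ofNat, map_one]; try norm_num]
        linear_combination (norm := ring1) ((-1)*(P 2))*hp
      refine ⟨5008 * P 2, mul_ne_zero hc5008 hZ, Or.inr (Or.inr (Or.inl ?_))⟩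
      funext i; fin_cases i
      · exact c0
      · exact c1
      · exact c2
    rcases mul_eq_zero.mp h1 with h2|h2
    · have hXZ : P 0 - (P 2) = 0 := pow_eq_zero_iff two_ne_zero |>.mp h2
      have hq : ((P 1) - 0*(P 2))^2 * (P 2)^7 = (0:kbar) := by
        linear_combination (norm := ring1) (2379*(P 1)*(P 2) + 3953*(P 2)^2)*hx + (4582*(P 1)^2 + 6104*(P 1)*(P 2) + (-5843)*(P 2)^2)*hy + ((-14513)*(P 0)^3*(P 1)^5 + 8814*(P 0)^3*(P 1)^4*(P 2) + (-13759)*(P 0)^3*(P 1)^3*(P 2)^2 + 5435*(P 0)^3*(P 1)^2*(P 2)^3 + 13146*(P 0)^3*(P 1)*(P 2)^4 + 13065*(P 0)^3*(P 2)^5 + 14923*(P 0)^2*(P 1)^6 + 1480*(P 0)^2*(P 1)^5*(P 2) + (-5865)*(P 0)^2*(P 1)^4*(P 2)^2 + 873*(P 0)^2*(P 1)^3*(P 2)^3 + (-12736)*(P 0)^2*(P 1)^2*(P 2)^4 + (-1748)*(P 0)^2*(P 1)*(P 2)^5 + (-5756)*(P 0)^2*(P 2)^6 + (-12013)*(P 0)*(P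 1)^5*(P 2)^2 + (-12093)*(P 0)*(P 1)^4*(P 2)^3 + 13061*(P 0)*(P 1)^3*(P 2)^4 + (-8568)*(P 0)*(P 1)^2*(P 2)^5 + (-8117)*(P 0)*(P 1)*(P 2)^6 + 12211*(P 0)*(P 2)^7 + 642*(P 1)^4*(P 2)^4 + 4011*(P 1)^3*(P 2)^5 + 14384*(P 1)^2*(P 2)^6 + (-14988)*(P 1)*(P 2)^7 + 12536*(P 2)^8)*hXZ + ((-14689)*(P 0)^4*(P 1)^5 + (-21142)*(P 0)^4*(P 1)^4*(P 2) + 15181*(P 0)^4*(P 1)^3*(P 2)^2 + (-4433)*(P 0)^4*(P 1)^2*(P 2)^3 + (-4136)*(P 0)^4*(P 1)*(P 2)^4 + 5736*(P 0)^4*(P 2)^5 + (-22819)*(P 0)^3*(P 1)^6 + (-46639)*(P 0)^3*(P 1)^5*(P 2) + (-4026)*(P 0)^3*(P 1)^4*(P 2)^2 + (-3804)*(P 0)^3*(P 1)^3*(P 2)^3 + (-4398)*(P 0)^3*(P 1)^2*(P 2)^4 + (-20092)*(P 0)^3*(P 1)*(P 2)^5 + (-4989)*(P 0)^3*(P 2)^6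 + (-7108)*(P 0)^2*(P 1)^6*(P 2) + (-32679)*(P 0)^2*(P 1)^5*(P 2)^2 + (-37874)*(P 0)^2*(P 1)^4*(P 2)^3 + 4380*(P 0)^2*(P 1)^3*(P 2)^4 + (-3555)*(P 0)^2*(P 1)^2*(P 2)^5 + (-143)*(P 0)^2*(P 1)*(P 2)^6 + 1570*(P 0)^2*(P 2)^7 + (-4547)*(P 0)*(P 1)^5*(P 2)^3 + (-22399)*(P 0)*(P 1)^4*(P 2)^4 + (-24608)*(P 0)*(P 1)^3*(P 2)^5 + 6101*(P 0)*(P 1)^2*(P 2)^6 + (-4175)*(P 0)*(P 1)*(P 2)^7 + 2379*(P 0)*(P 2)^8 + (-2277)*(P 1)^4*(P 2)^5 + (-4960)*(P 1)^3*(P 2)^6 + (-6979)*(P 1)^2*(P 2)^7 + (-8935)*(P 1)*(P 2)^8 + 974*(P 2)^9)*hp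
      have hYZ : P 1 - 0*(P 2) = 0 := by
        rcases mul_eq_zero.mp hq with h|h
        · exact pow_eq_zero_iff two_ne_zero |>.mp h
        · exact absurd h (pow_ne_zero _ hZ)
      have c0 : P 0 = P 2 * algebraMap Fp kbar (1:Fp) := by
        rw [show (algebraMap Fp kbar) (1:Fp) = (1:kbar) from map_one _]
        linear_combination (norm := ring1) (1)*hXZ
      have c1 : P 1 = P 2 * algebraMap Fp kbar (0:Fp) := by
        rw [show (algebraMap Fp kbar) (0:Fp) = (0:kbar) from map_zero _]
        linear_combination (norm := ring1) (1)*hYZ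
      have c2 : P 2 = P 2 * algebraMap Fp kbar (1:Fp) := by
        rw [show (algebraMap Fp kbar) (1:Fp) = (1:kbar) from map_one _]
        linear_combination (norm := ring1) (0:kbar)*hp
      refine ⟨P 2, hZ, Or.inr (Or.inr (Or.inr (Or.inl ?_)))⟩
      funext i; fin_cases i
      · exact c0
      · exact c1
      · exact c2
    rcases mul_eq_zero.mp h2 with h3|h3
    · have hXZ : P 0 - 19148*(P 2) = 0 := pow_eq_zero_iff (by norm_num) |>.mp h3
      have hq : ((P 1) - 6991*(P 2)) * ((P 1) - 6990*(P 2)) * (P 2)^7 = (0:kbar) := by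
        linear_combination (norm := ring1) ((-7031)*(P 1)*(P 2) + 8186*(P 2)^2)*hx + ((-8266)*(P 1)^2 + 1928*(P 1)*(P 2) + (-10427)*(P 2)^2)*hy + (1748*(P 0)^3*(P 1)^5 + 12308*(P 0)^3*(P 1)^4*(P 2) + 13493*(P 0)^3*(P 1)^3*(P 2)^2 + (-10442)*(P 0)^3*(P 1)^2*(P 2)^3 + 6991*(P 0)^3*(P 1)*(P 2)^4 + (-5066)*(P 0)^3*(P 2)^5 + (-1845)*(P 0)^2*(P 1)^6 + 2512*(P 0)^2*(P 1)^5*(P 2) + 2298*(P 0)^2*(P 1)^4*(P 2)^2 + (-13261)*(P 0)^2*(P 1)^3*(P 2)^3 + (-2289)*(P 0)^2*(P 1)^2*(P 2)^4 + (-6900)*(P 0)^2*(P 1)*(P 2)^5 + 9690*(P 0)^2*(P 2)^6 + (-6172)*(P 0)*(P 1)^5*(P 2)^2 + 3936*(P 0)*(P 1)^4*(P 2)^3 + (-8543)*(P 0)*(P 1)^3*(P 2)^4 + 6581*(P 0)*(P 1)^2*(P 2)^5 + (-530)*(P 0)*(P 1)*(P 2)^6 + (-4010)*(P 0)*(P 2)^7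 + (-6601)*(P 1)^4*(P 2)^4 + 2207*(P 1)^3*(P 2)^5 + 13399*(P 1)^2*(P 2)^6 + (-9147)*(P 1)*(P 2)^7 + (-14793)*(P 2)^8)*hXZ + (26500*(P 0)^4*(P 1)^5 + (-3344)*(P 0)^4*(P 1)^4*(P 2) + 35393*(P 0)^4*(P 1)^3*(P 2)^2 + 11082*(P 0)^4*(P 1)^2*(P 2)^3 + 1421*(P 0)^4*(P 1)*(P 2)^4 + 10237*(P 0)^4*(P 2)^5 + 41165*(P 0)^3*(P 1)^6 + 29592*(P 0)^3*(P 1)^5*(P 2) + 47351*(P 0)^3*(P 1)^4*(P 2)^2 + 27331*(P 0)^3*(P 1)^3*(P 2)^3 + 35696*(P 0)^3*(P 1)^2*(P 2)^4 + (-14186)*(P 0)^3*(P 1)*(P 2)^5 + (-14046)*(P 0)^3*(P 2)^6 + 19833*(P 0)^2*(P 1)^6*(P 2) + 18649*(P 0)^2*(P 1)^5*(P 2)^2 + 3451*(P 0)^2*(P 1)^4*(P 2)^3 + 24516*(P 0)^2*(P 1)^3*(P 2)^4 + 13799*(P 0)^2*(P 1)^2*(P 2)^5 + (-3088)*(P 0)^2*(P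 1)*(P 2)^6 + 8969*(P 0)^2*(P 2)^7 + 9504*(P 0)*(P 1)^5*(P 2)^3 + 15585*(P 0)*(P 1)^4*(P 2)^4 + (-6731)*(P 0)*(P 1)^3*(P 2)^5 + 35478*(P 0)*(P 1)^2*(P 2)^6 + 1607*(P 0)*(P 1)*(P 2)^7 + 1275*(P 0)*(P 2)^8 + 2523*(P 1)^4*(P 2)^5 + (-3634)*(P 1)^3*(P 2)^6 + 17493*(P 1)^2*(P 2)^7 + (-4816)*(P 1)*(P 2)^8 + (-7121)*(P 2)^9)*hp
      rcases mul_eq_zero.mp hq with h|h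
      swap
      · exact absurd h (pow_ne_zero _ hZ)
      rcases mul_eq_zero.mp h with h4|h4
      · have hYZ : P 1 - 6991*(P 2) = 0 := h4
        have c0 : P 0 = 2504 * P 2 * algebraMap Fp kbar (16+4*abar+4*bbar) := by
          rw [show (algebraMap Fp kbar) (16+4*abar+4*bbar) = (109588:kbar) from by simp only [abar, bbar, dbar, map_add, map_sub, map_mul, map_ofNat, map_one]; try norm_num]
          linear_combination (norm := ring1) (1)*hXZ + ((-9132)*(P 2))*hp
        have c1 : P 1 = 2504 * P 2 * algebraMap Fp kbar (3*dbar+6) := by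
          rw [show (algebraMap Fp kbar) (3*dbar+6) = (83892:kbar) from by simp only [abar, bbar, dbar, map_add, map_sub, map_mul, map_ofNat, map_one]; try norm_num]
          linear_combination (norm := ring1) (1)*hYZ + ((-6991)*(P 2))*hp
        have c2 : P 2 = 2504 * P 2 * algebraMap Fp kbar (12:Fp) := by
          rw [show (algebraMap Fp kbar) (12:Fp) = (12:kbar) from by simp only [abar, bbar, dbar, map_add, map_sub, map_mul, map_ofNat, map_one]; try norm_num]
          linear_combination (norm := ring1) ((-1)*(P 2))*hp
        refine ⟨2504 * P 2, mul_ne_zero hc2504 hZ, Or.inr (Or.inr (Or.inr (Or.inr (Or.inl ?_))))⟩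
        funext i; fin_cases i
        · exact c0
        · exact c1
        · exact c2
      · have hYZ : P 1 - 6990*(P 2) = 0 := h4
        have c0 : P 0 = 2504 * P 2 * algebraMap Fp kbar (16+4*abar+4*bbar) := by
          rw [show (algebraMap Fp kbar) (16+4*abar+4*bbar) = (109588:kbar) from by simp only [abar, bbar, dbar, map_add, map_sub, map_mul, map_ofNat, map_one]; try norm_num]
          linear_combination (norm := ring1) (1)*hXZ + ((-9132)*(P 2))*hp
        have c1 : P 1 = 2504 * P 2 * algebraMap Fp kbar (3*dbar-6) := by
          rw [show (algebraMap Fp kbar) (3*dbar-6) = (83880:kbar) from by simp only [abar, bbar, dbar, map_add, map_sub, map_mul, map_ofNat, map_one]; try norm_num]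
          linear_combination (norm := ring1) (1)*hYZ + ((-6990)*(P 2))*hp
        have c2 : P 2 = 2504 * P 2 * algebraMap Fp kbar (12:Fp) := by
          rw [show (algebraMap Fp kbar) (12:Fp) = (12:kbar) from by simp only [abar, bbar, dbar, map_add, map_sub, map_mul, map_ofNat, map_one]; try norm_num]
          linear_combination (norm := ring1) ((-1)*(P 2))*hp
        refine ⟨2504 * P 2, mul_ne_zero hc2504 hZ, Or.inr (Or.inr (Or.inr (Or.inr (Or.inr ?_))))⟩
        funext i; fin_cases i
        · exact c0
        · exact c1
        · exact c2
    · exact absurd (pow_eq_zero_iff (by norm_num) |>.mp h3) hZ
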